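/- For every integer M ≥ 2, the eigenvalues of the matrix A are exactly −1, (M−1 + i·√(2M−1))/M, and (M−1 − i·√(2M−1))/M, and these three complex numbers are pairwise distinct; moreover the two non-real eigenvalues have modulus 1. -/

import Mathlib

/-- The reduced `3 × 3` transition matrix of the star-graph quantum walk with `M` edges:
rows `(0, (M−2)/M, −2/M)`, `(1, 0, 0)`, `(0, 2(M−1)/M, (M−2)/M)`. -/
noncomputable def starA (M : ℕ) : Matrix (Fin 3) (Fin 3) ℂ :=
  !![0, ((M : ℂ) - 2) / M, -2 / M;
     1, 0, 0;
     0, 2 * ((M : ℂ) - 1) / M, ((M : ℂ) - 2) / M]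

lemma starA_aux (M : ℕ) (hM : 2 ≤ M) (s : ℝ) (hspos : 0 < s)
    (hs2 : s ^ 2 = 2 * M - 1) :
    spectrum ℂ (starA M) =
        {-1, (((M : ℂ) - 1) + Complex.I * (s : ℝ)) / M,
             (((M : ℂ) - 1) - Complex.I * (s : ℝ)) / M} ∧
      ((-1 : ℂ) ≠ (((M : ℂ) - 1) + Complex.I * (s : ℝ)) / M ∧
        (-1 : ℂ) ≠ (((M : ℂ) - 1) - Complex.I * (s : ℝ)) / M ∧
        (((M : ℂ) - 1) + Complex.I * (s : ℝ)) / M ≠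
          (((M : ℂ) - 1) - Complex.I * (s : ℝ)) / M) ∧
      ‖(((M : ℂ) - 1) + Complex.I * (s : ℝ)) / M‖ = 1 ∧
      ‖(((M : ℂ) - 1) - Complex.I * (s : ℝ)) / M‖ = 1 := by
  have hMne : (M:ℂ) ≠ 0 := Nat.cast_ne_zero.mpr (by omega)
  have hMpos : (0:ℝ) < M := by positivity
  have hsC : ((s:ℂ)) ^ 2 = 2 * M - 1 := by exact_mod_cast congrArg Complex.ofReal hs2
  refine ⟨?_, ⟨?_, ?_, ?_⟩, ?_, ?_⟩
  · ext z
    rw [spectrum.mem_iff, Matrix.isUnit_iff_isUnit_det, isUnit_iff_ne_zero, not_not]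
    have hdet : (algebraMap ℂ (Matrix (Fin 3) (Fin 3) ℂ) z - starA M).det
        = (z + 1) * ((z - (((M : ℂ) - 1) + Complex.I * s) / M) *
            (z - (((M : ℂ) - 1) - Complex.I * s) / M)) := by
      rw [Matrix.det_fin_three]
      simp only [starA, Matrix.algebraMap_matrix_apply, Matrix.sub_apply, Matrix.cons_val',
        Matrix.cons_val_zero, Matrix.cons_val_one, Matrix.head_cons, Matrix.empty_val',
        Matrix.cons_val_fin_one, Matrix.head_fin_const, Matrix.of_apply]
      simp
      field_simp
      ring_nf
      rw [Complex.I_sq]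
      linear_combination (-(z+1)) * hsC
    rw [hdet, mul_eq_zero, mul_eq_zero, sub_eq_zero, sub_eq_zero,
      add_eq_zero_iff_eq_neg]
    simp [Set.mem_insert_iff]
  · intro h
    field_simp at h
    have := congrArg Complex.im h
    simp at this
    exact hspos.ne' (by linarith)
  · intro h
    field_simp at h
    have := congrArg Complex.im h
    simp at this
    exact hspos.ne' (by linarith)
  · intro h
    field_simp at h
    have h2 : Complex.I * s = 0 := by linear_combination h / 2
    simp [Complex.I_ne_zero] at h2
    exact hspos.ne' h2
  · rw [norm_div, Complex.norm_natCast, div_eq_one_iff_eq (by positivity),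
      Complex.norm_def, Complex.normSq_apply]
    simp
    rw [show ((M:ℝ)-1)*((M:ℝ)-1) + s*s = (M:ℝ)^2 by nlinarith]
    exact Real.sqrt_sq hMpos.le
  · rw [norm_div, Complex.norm_natCast, div_eq_one_iff_eq (by positivity),
      Complex.norm_def, Complex.normSq_apply]
    simp
    rw [show ((M:ℝ)-1)*((M:ℝ)-1) + s*s = (M:ℝ)^2 by nlinarith]
    exact Real.sqrt_sq hMpos.le

/-- For every integer `M ≥ 2`, the eigenvalues of the reduced transition matrix `A` are
exactly `−1`, `(M−1 + i√(2M−1))/M` and `(M−1 − i√(2M−1))/M`; these three complex numbers are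
pairwise distinct, and the two non-real eigenvalues have modulus `1`. -/
theorem starA_eigenvalues (M : ℕ) (hM : 2 ≤ M) :
    spectrum ℂ (starA M) =
        {-1, (((M : ℂ) - 1) + Complex.I * (Real.sqrt (2 * M - 1) : ℝ)) / M,
             (((M : ℂ) - 1) - Complex.I * (Real.sqrt (2 * M - 1) : ℝ)) / M} ∧
      ((-1 : ℂ) ≠ (((M : ℂ) - 1) + Complex.I * (Real.sqrt (2 * M - 1) : ℝ)) / M ∧
        (-1 : ℂ) ≠ (((M : ℂ) - 1) - Complex.I * (Real.sqrt (2 * M - 1) : ℝ)) / M ∧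
        (((M : ℂ) - 1) + Complex.I * (Real.sqrt (2 * M - 1) : ℝ)) / M ≠
          (((M : ℂ) - 1) - Complex.I * (Real.sqrt (2 * M - 1) : ℝ)) / M) ∧
      ‖(((M : ℂ) - 1) + Complex.I * (Real.sqrt (2 * M - 1) : ℝ)) / M‖ = 1 ∧
      ‖(((M : ℂ) - 1) - Complex.I * (Real.sqrt (2 * M - 1) : ℝ)) / M‖ = 1 := by
  have hM1 : (1:ℝ) ≤ (M:ℝ) := by exact_mod_cast Nat.one_le_of_lt hM
  have h2M : (0:ℝ) < 2 * (M:ℝ) - 1 := by linarith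
  exact starA_aux M hM _ (Real.sqrt_pos.mpr h2M) (Real.sq_sqrt h2M.le)
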